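/- Let (M,g,H) be a Riemannian manifold with a 3-form H that is closed (dH = 0). Let ∇̂ and ∇̆ be the metric connections with torsion +H and -H respectively, with curvatures R̂ and R̆. Then R̂_{ijkm} = R̆_{kmij} for all indices. -/

import Mathlib

open scoped BigOperators

noncomputable section

variable {n : ℕ}

/-- Coordinate partial derivative of a function on `ℝⁿ` in the `i`-th coordinate direction. -/
def pd (i : Fin n) (f : EuclideanSpace ℝ (Fin n) → ℝ) (x : EuclideanSpace ℝ (Fin n)) : ℝ :=
  fderiv ℝ f x (EuclideanSpace.single i 1)

/-- Lowered Christoffel symbols `Γ_{kij}` of the Levi-Civita connection of the metric `g`. -/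
def christoffelLow (g : EuclideanSpace ℝ (Fin n) → Fin n → Fin n → ℝ) (k i j : Fin n)
    (x : EuclideanSpace ℝ (Fin n)) : ℝ :=
  (1 / 2) * (pd i (fun y => g y j k) x + pd j (fun y => g y i k) x - pd k (fun y => g y i j) x)

/-- Christoffel symbols `Γ^k_{ij}` of the Levi-Civita connection `∇` of `g`. -/
def christoffel (g ginv : EuclideanSpace ℝ (Fin n) → Fin n → Fin n → ℝ) (k i j : Fin n)
    (x : EuclideanSpace ℝ (Fin n)) : ℝ :=
  ∑ l, ginv x k l * christoffelLow g l i j x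

/-- Connection coefficients `Γ̂^k_{ij} = Γ^k_{ij} + ½ H^k_{ij}` of the metric connection `∇̂`
with torsion the totally skew 3-form `H` (indices raised with `g`). -/
def christoffelHat (g ginv : EuclideanSpace ℝ (Fin n) → Fin n → Fin n → ℝ)
    (H : EuclideanSpace ℝ (Fin n) → Fin n → Fin n → Fin n → ℝ) (k i j : Fin n)
    (x : EuclideanSpace ℝ (Fin n)) : ℝ :=
  christoffel g ginv k i j x + (1 / 2) * ∑ l, ginv x k l * H x l i j

/-- Curvature `R̂_{ij}{}^k{}_m` of `∇̂`, with the convention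
`(∇̂_i∇̂_j - ∇̂_j∇̂_i) X^k = R̂_{ij}{}^k{}_m X^m` (modulo the torsion term). -/
def curvHatUp (g ginv : EuclideanSpace ℝ (Fin n) → Fin n → Fin n → ℝ)
    (H : EuclideanSpace ℝ (Fin n) → Fin n → Fin n → Fin n → ℝ) (i j k m : Fin n)
    (x : EuclideanSpace ℝ (Fin n)) : ℝ :=
  pd i (christoffelHat g ginv H k j m) x - pd j (christoffelHat g ginv H k i m) x
    + ∑ p, (christoffelHat g ginv H k i p x * christoffelHat g ginv H p j m x
        - christoffelHat g ginv H k j p x * christoffelHat g ginv H p i m x)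

/-- Fully lowered curvature tensor `R̂_{ijkm} = g_{kp} R̂_{ij}{}^p{}_m` of `∇̂`. -/
def curvHat (g ginv : EuclideanSpace ℝ (Fin n) → Fin n → Fin n → ℝ)
    (H : EuclideanSpace ℝ (Fin n) → Fin n → Fin n → Fin n → ℝ) (i j k m : Fin n)
    (x : EuclideanSpace ℝ (Fin n)) : ℝ :=
  ∑ p, g x k p * curvHatUp g ginv H i j p m x

/-- Covariant derivative `∇̂_i H_{jkm}` of the 3-form `H` with respect to `∇̂`. -/
def nablaHatH (g ginv : EuclideanSpace ℝ (Fin n) → Fin n → Fin n → ℝ)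
    (H : EuclideanSpace ℝ (Fin n) → Fin n → Fin n → Fin n → ℝ) (i j k m : Fin n)
    (x : EuclideanSpace ℝ (Fin n)) : ℝ :=
  pd i (fun y => H y j k m) x
    - ∑ p, (christoffelHat g ginv H p i j x * H x p k m
        + christoffelHat g ginv H p i k x * H x j p m
        + christoffelHat g ginv H p i m x * H x j k p)

/-- Covariant derivative `∇_i H_{jkm}` of the 3-form `H` with respect to the
Levi-Civita connection `∇` of `g`. -/
def nablaLCH (g ginv : EuclideanSpace ℝ (Fin n) → Fin n → Fin n → ℝ)
    (H : EuclideanSpace ℝ (Fin n) → Fin n → Fin n → Fin n → ℝ) (i j k m : Fin n)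
    (x : EuclideanSpace ℝ (Fin n)) : ℝ :=
  pd i (fun y => H y j k m) x
    - ∑ p, (christoffel g ginv p i j x * H x p k m
        + christoffel g ginv p i k x * H x j p m
        + christoffel g ginv p i m x * H x j k p)

/-- Components `(dH)_{ijkm}` of the exterior derivative of the 3-form `H`. -/
def extDerH (H : EuclideanSpace ℝ (Fin n) → Fin n → Fin n → Fin n → ℝ) (i j k m : Fin n)
    (x : EuclideanSpace ℝ (Fin n)) : ℝ :=
  pd i (fun y => H y j k m) x - pd j (fun y => H y i k m) x
    + pd k (fun y => H y i j m) x - pd m (fun y => H y i j k) x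

/-- `g` is a smooth Riemannian metric (in the fixed global chart) with inverse `ginv`. -/
def IsRiemannianData (g ginv : EuclideanSpace ℝ (Fin n) → Fin n → Fin n → ℝ) : Prop :=
  (∀ x i j, g x i j = g x j i) ∧
  (∀ (x : EuclideanSpace ℝ (Fin n)) (v : Fin n → ℝ), v ≠ 0 →
    0 < ∑ i, ∑ j, g x i j * v i * v j) ∧
  (∀ x i j, (∑ k, g x i k * ginv x k j) = if i = j then (1 : ℝ) else 0) ∧
  (∀ i j, ContDiff ℝ (⊤ : ℕ∞) fun x => g x i j) ∧
  (∀ i j, ContDiff ℝ (⊤ : ℕ∞) fun x => ginv x i j)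

/-- `H` is a smooth (totally antisymmetric) 3-form. -/
def IsThreeForm (H : EuclideanSpace ℝ (Fin n) → Fin n → Fin n → Fin n → ℝ) : Prop :=
  (∀ x i j k, H x i j k = -H x j i k) ∧
  (∀ x i j k, H x i j k = -H x i k j) ∧
  (∀ i j k, ContDiff ℝ (⊤ : ℕ∞) fun x => H x i j k)


/-! ### Auxiliary lemmas -/

section Aux

variable {g ginv : EuclideanSpace ℝ (Fin n) → Fin n → Fin n → ℝ}
variable {H : EuclideanSpace ℝ (Fin n) → Fin n → Fin n → Fin n → ℝ}

private lemma topLe1 : (1 : WithTop ℕ∞) ≤ ((⊤ : ℕ∞) : WithTop ℕ∞) := by exact_mod_cast le_top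

private lemma diffAt {f : EuclideanSpace ℝ (Fin n) → ℝ} (hf : ContDiff ℝ (⊤:ℕ∞) f)
    (x : EuclideanSpace ℝ (Fin n)) : DifferentiableAt ℝ f x :=
  (hf.differentiable (by simp)) x

lemma pd_add {f h : EuclideanSpace ℝ (Fin n) → ℝ} (i : Fin n) (x : EuclideanSpace ℝ (Fin n))
    (hf : DifferentiableAt ℝ f x) (hh : DifferentiableAt ℝ h x) :
    pd i (fun y => f y + h y) x = pd i f x + pd i h x := by
  unfold pd; rw [fderiv_fun_add hf hh]; simp

lemma pd_sub {f h : EuclideanSpace ℝ (Fin n) → ℝ} (i : Fin n) (x : EuclideanSpace ℝ (Fin n))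
    (hf : DifferentiableAt ℝ f x) (hh : DifferentiableAt ℝ h x) :
    pd i (fun y => f y - h y) x = pd i f x - pd i h x := by
  unfold pd; rw [fderiv_fun_sub hf hh]; simp

lemma pd_neg {f : EuclideanSpace ℝ (Fin n) → ℝ} (i : Fin n) (x : EuclideanSpace ℝ (Fin n)) :
    pd i (fun y => -f y) x = -pd i f x := by
  unfold pd; rw [fderiv_fun_neg]; simp

lemma pd_const_mul {f : EuclideanSpace ℝ (Fin n) → ℝ} (i : Fin n) (x : EuclideanSpace ℝ (Fin n))
    (hf : DifferentiableAt ℝ f x) (c : ℝ) :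
    pd i (fun y => c * f y) x = c * pd i f x := by
  unfold pd; rw [fderiv_const_mul hf c]; simp

lemma pd_mul {f h : EuclideanSpace ℝ (Fin n) → ℝ} (i : Fin n) (x : EuclideanSpace ℝ (Fin n))
    (hf : DifferentiableAt ℝ f x) (hh : DifferentiableAt ℝ h x) :
    pd i (fun y => f y * h y) x = f x * pd i h x + h x * pd i f x := by
  unfold pd; rw [fderiv_fun_mul hf hh]; simp

lemma pd_sum {ι : Type*} [Fintype ι] {f : ι → EuclideanSpace ℝ (Fin n) → ℝ} (i : Fin n)
    (x : EuclideanSpace ℝ (Fin n)) (hf : ∀ p, DifferentiableAt ℝ (f p) x) :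
    pd i (fun y => ∑ p, f p y) x = ∑ p, pd i (f p) x := by
  unfold pd; rw [fderiv_fun_sum (fun p _ => hf p)]; simp

lemma contDiff_pd {f : EuclideanSpace ℝ (Fin n) → ℝ} (hf : ContDiff ℝ (⊤:ℕ∞) f) (i : Fin n) :
    ContDiff ℝ (⊤:ℕ∞) (pd i f) := by
  have h1 : ContDiff ℝ (⊤:ℕ∞) (fderiv ℝ f) := hf.fderiv_right (by exact_mod_cast le_top)
  exact h1.clm_apply contDiff_const

lemma pd_pd_comm {f : EuclideanSpace ℝ (Fin n) → ℝ} (hf : ContDiff ℝ (⊤:ℕ∞) f) (a b : Fin n)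
    (x : EuclideanSpace ℝ (Fin n)) : pd a (pd b f) x = pd b (pd a f) x := by
  have h1 : ContDiff ℝ (⊤:ℕ∞) (fderiv ℝ f) := hf.fderiv_right (by exact_mod_cast le_top)
  have hsymm : IsSymmSndFDerivAt ℝ f x :=
    hf.contDiffAt.isSymmSndFDerivAt
      (by rw [minSmoothness_of_isRCLikeNormedField]; exact_mod_cast ENat.natCast_le_of_coe_top_le_withTop le_rfl 2)
  have key : ∀ v w : EuclideanSpace ℝ (Fin n),
      fderiv ℝ (fun y => fderiv ℝ f y w) x v = fderiv ℝ (fderiv ℝ f) x v w := by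
    intro v w
    rw [show (fun y => fderiv ℝ f y w) = fun y => (fderiv ℝ f y) w from rfl,
      fderiv_clm_apply (h1.differentiable (by simp) x) (differentiableAt_const w)]
    simp
  show fderiv ℝ (pd b f) x _ = fderiv ℝ (pd a f) x _
  rw [show pd b f = fun y => fderiv ℝ f y (EuclideanSpace.single b 1) from rfl,
      show pd a f = fun y => fderiv ℝ f y (EuclideanSpace.single a 1) from rfl, key, key, hsymm]

/-- Lowered connection coefficients of the connection with torsion `H`. -/
def CLow (g : EuclideanSpace ℝ (Fin n) → Fin n → Fin n → ℝ)
    (H : EuclideanSpace ℝ (Fin n) → Fin n → Fin n → Fin n → ℝ) (k i j : Fin n) :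
    EuclideanSpace ℝ (Fin n) → ℝ :=
  fun x => christoffelLow g k i j x + (1 / 2) * H x k i j

lemma contDiff_christoffelLow (hg4 : ∀ i j, ContDiff ℝ (⊤:ℕ∞) fun x => g x i j) (k i j : Fin n) :
    ContDiff ℝ (⊤:ℕ∞) (christoffelLow g k i j) := by
  unfold christoffelLow
  exact contDiff_const.mul
    (((contDiff_pd (hg4 j k) i).add (contDiff_pd (hg4 i k) j)).sub (contDiff_pd (hg4 i j) k))

lemma contDiff_CLow (hg4 : ∀ i j, ContDiff ℝ (⊤:ℕ∞) fun x => g x i j)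
    (hH3 : ∀ i j k, ContDiff ℝ (⊤:ℕ∞) fun x => H x i j k) (k i j : Fin n) :
    ContDiff ℝ (⊤:ℕ∞) (CLow g H k i j) :=
  (contDiff_christoffelLow hg4 k i j).add (contDiff_const.mul (hH3 k i j))

lemma hat_eq (k i j : Fin n) (x : EuclideanSpace ℝ (Fin n)) :
    christoffelHat g ginv H k i j x = ∑ l, ginv x k l * CLow g H l i j x := by
  unfold christoffelHat christoffel CLow
  rw [Finset.mul_sum, ← Finset.sum_add_distrib]
  exact Finset.sum_congr rfl fun l _ => by ring

lemma contDiff_hat (hg5 : ∀ i j, ContDiff ℝ (⊤:ℕ∞) fun x => ginv x i j)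
    (hg4 : ∀ i j, ContDiff ℝ (⊤:ℕ∞) fun x => g x i j)
    (hH3 : ∀ i j k, ContDiff ℝ (⊤:ℕ∞) fun x => H x i j k) (k i j : Fin n) :
    ContDiff ℝ (⊤:ℕ∞) (christoffelHat g ginv H k i j) := by
  rw [show christoffelHat g ginv H k i j = fun x => ∑ l, ginv x k l * CLow g H l i j x from
    funext fun x => hat_eq k i j x]
  exact ContDiff.sum fun l _ => (hg5 k l).mul (contDiff_CLow hg4 hH3 l i j)

end Aux

section Aux2

variable {g ginv : EuclideanSpace ℝ (Fin n) → Fin n → Fin n → ℝ}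
variable {H : EuclideanSpace ℝ (Fin n) → Fin n → Fin n → Fin n → ℝ}

lemma lower_hat (hinv : ∀ x i j, (∑ k, g x i k * ginv x k j) = if i = j then (1 : ℝ) else 0)
    (k i j : Fin n) (x : EuclideanSpace ℝ (Fin n)) :
    ∑ p, g x k p * christoffelHat g ginv H p i j x = CLow g H k i j x := by
  calc ∑ p, g x k p * christoffelHat g ginv H p i j x
      = ∑ p, ∑ l, g x k p * ginv x p l * CLow g H l i j x := by
        refine Finset.sum_congr rfl fun p _ => ?_
        rw [hat_eq, Finset.mul_sum]
        exact Finset.sum_congr rfl fun l _ => by ring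
    _ = ∑ l, (∑ p, g x k p * ginv x p l) * CLow g H l i j x := by
        rw [Finset.sum_comm]
        exact Finset.sum_congr rfl fun l _ => by rw [Finset.sum_mul]
    _ = CLow g H k i j x := by
        simp [hinv x k]

lemma ginv_symm (hgs : ∀ x i j, g x i j = g x j i)
    (hinv : ∀ x i j, (∑ k, g x i k * ginv x k j) = if i = j then (1 : ℝ) else 0)
    (x : EuclideanSpace ℝ (Fin n)) (a b : Fin n) : ginv x a b = ginv x b a := by
  set A : Matrix (Fin n) (Fin n) ℝ := Matrix.of (g x) with hA
  set B : Matrix (Fin n) (Fin n) ℝ := Matrix.of (ginv x) with hB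
  have hAB : A * B = 1 := by
    ext i j
    rw [Matrix.mul_apply, Matrix.one_apply]
    exact hinv x i j
  have hAT : A.transpose = A := by
    ext i j; exact hgs x j i
  have hBTA : B.transpose * A = 1 := by
    have := congrArg Matrix.transpose hAB
    rw [Matrix.transpose_mul, hAT, Matrix.transpose_one] at this
    exact this
  have hBA : B * A = 1 := mul_eq_one_comm.mp hAB
  have hBT : B.transpose = B := by
    calc B.transpose = B.transpose * (A * B) := by rw [hAB, Matrix.mul_one]
    _ = (B.transpose * A) * B := by rw [Matrix.mul_assoc]
    _ = B := by rw [hBTA, Matrix.one_mul]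
  exact congrFun (congrFun hBT b) a

lemma pd_g (hgs : ∀ x i j, g x i j = g x j i) (i k p : Fin n) (x : EuclideanSpace ℝ (Fin n)) :
    pd i (fun y => g y k p) x = christoffelLow g p i k x + christoffelLow g k i p x := by
  unfold christoffelLow
  rw [show (fun y => g y p k) = fun y => g y k p from funext fun y => hgs y p k]
  ring

lemma christoffelLow_symm (hgs : ∀ x i j, g x i j = g x j i) (k a b : Fin n)
    (x : EuclideanSpace ℝ (Fin n)) : christoffelLow g k a b x = christoffelLow g k b a x := by
  unfold christoffelLow
  rw [show (fun y => g y a b) = fun y => g y b a from funext fun y => hgs y a b]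
  ring

lemma pd_christoffelLow (hg4 : ∀ i j, ContDiff ℝ (⊤:ℕ∞) fun x => g x i j) (a c b d : Fin n)
    (x : EuclideanSpace ℝ (Fin n)) :
    pd a (christoffelLow g c b d) x =
      (1/2) * (pd a (pd b (fun y => g y d c)) x + pd a (pd d (fun y => g y b c)) x
        - pd a (pd c (fun y => g y b d)) x) := by
  have h1 := diffAt (contDiff_pd (hg4 d c) b) x
  have h2 := diffAt (contDiff_pd (hg4 b c) d) x
  have h3 := diffAt (contDiff_pd (hg4 b d) c) x
  rw [show christoffelLow g c b d = fun y => (1/2) * ((pd b (fun z => g z d c) y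
      + pd d (fun z => g z b c) y) - pd c (fun z => g z b d) y) from rfl]
  rw [pd_const_mul a x ((h1.fun_add h2).fun_sub h3), pd_sub a x (h1.fun_add h2) h3, pd_add a x h1 h2]

end Aux2

section Aux3

variable {g ginv : EuclideanSpace ℝ (Fin n) → Fin n → Fin n → ℝ}
variable {H : EuclideanSpace ℝ (Fin n) → Fin n → Fin n → Fin n → ℝ}

lemma curvHat_eq (hg : IsRiemannianData g ginv) (hH : IsThreeForm H) (i j k m : Fin n)
    (x : EuclideanSpace ℝ (Fin n)) :
    curvHat g ginv H i j k m x =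
      pd i (CLow g H k j m) x - pd j (CLow g H k i m) x
      - ∑ p, ∑ q, CLow g H p i k x * (ginv x p q * CLow g H q j m x)
      + ∑ p, ∑ q, CLow g H p j k x * (ginv x p q * CLow g H q i m x) := by
  obtain ⟨hgs, _, hinv, hg4, hg5⟩ := hg
  obtain ⟨hs1, hs2, hH3⟩ := hH
  have hHatCD : ∀ a b c : Fin n, ContDiff ℝ (⊤:ℕ∞) (christoffelHat g ginv H a b c) :=
    fun a b c => contDiff_hat hg5 hg4 hH3 a b c
  -- product rule step
  have prod1 : ∀ a b d : Fin n,
      ∑ p, g x k p * pd d (christoffelHat g ginv H p a b) x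
        = pd d (CLow g H k a b) x
          - ∑ p, christoffelHat g ginv H p a b x * pd d (fun y => g y k p) x := by
    intro a b d
    have h1 : pd d (fun y => ∑ p, g y k p * christoffelHat g ginv H p a b y) x
        = ∑ p, (g x k p * pd d (christoffelHat g ginv H p a b) x
            + christoffelHat g ginv H p a b x * pd d (fun y => g y k p) x) := by
      rw [pd_sum d x (fun p => (diffAt (hg4 k p) x).fun_mul (diffAt (hHatCD p a b) x))]
      exact Finset.sum_congr rfl fun p _ =>
        pd_mul d x (diffAt (hg4 k p) x) (diffAt (hHatCD p a b) x)
    have h2 : (fun y => ∑ p, g y k p * christoffelHat g ginv H p a b y) = CLow g H k a b :=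
      funext fun y => lower_hat hinv k a b y
    rw [h2] at h1
    rw [h1, Finset.sum_add_distrib]
    ring
  -- correction coefficients
  have corr : ∀ a q : Fin n,
      CLow g H k a q x - (christoffelLow g q a k x + christoffelLow g k a q x)
        = -(CLow g H q a k x) := by
    intro a q
    have hHs : H x k a q = -H x q a k := by
      rw [hs1 x k a q, hs2 x a k q, hs1 x a q k]; ring
    show christoffelLow g k a q x + (1/2) * H x k a q - _ = -(christoffelLow g q a k x + (1/2) * H x q a k)
    rw [hHs]; ring
  -- quadratic term
  have quad : ∑ p, g x k p * ∑ q, (christoffelHat g ginv H p i q x * christoffelHat g ginv H q j m x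
        - christoffelHat g ginv H p j q x * christoffelHat g ginv H q i m x)
      = ∑ q, CLow g H k i q x * christoffelHat g ginv H q j m x
        - ∑ q, CLow g H k j q x * christoffelHat g ginv H q i m x := by
    calc ∑ p, g x k p * ∑ q, (christoffelHat g ginv H p i q x * christoffelHat g ginv H q j m x
          - christoffelHat g ginv H p j q x * christoffelHat g ginv H q i m x)
        = ∑ q, ((∑ p, g x k p * christoffelHat g ginv H p i q x) * christoffelHat g ginv H q j m x
            - (∑ p, g x k p * christoffelHat g ginv H p j q x) * christoffelHat g ginv H q i m x) := by
          simp only [Finset.mul_sum]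
          rw [Finset.sum_comm]
          refine Finset.sum_congr rfl fun q _ => ?_
          rw [Finset.sum_mul, Finset.sum_mul, ← Finset.sum_sub_distrib]
          exact Finset.sum_congr rfl fun p _ => by ring
      _ = ∑ q, (CLow g H k i q x * christoffelHat g ginv H q j m x
            - CLow g H k j q x * christoffelHat g ginv H q i m x) := by
          refine Finset.sum_congr rfl fun q _ => ?_
          rw [lower_hat hinv, lower_hat hinv]
      _ = _ := Finset.sum_sub_distrib _ _
  -- assemble
  unfold curvHat curvHatUp
  have expand : ∑ p, g x k p * (pd i (christoffelHat g ginv H p j m) x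
        - pd j (christoffelHat g ginv H p i m) x
        + ∑ q, (christoffelHat g ginv H p i q x * christoffelHat g ginv H q j m x
          - christoffelHat g ginv H p j q x * christoffelHat g ginv H q i m x))
      = ∑ p, g x k p * pd i (christoffelHat g ginv H p j m) x
        - ∑ p, g x k p * pd j (christoffelHat g ginv H p i m) x
        + ∑ p, g x k p * ∑ q, (christoffelHat g ginv H p i q x * christoffelHat g ginv H q j m x
          - christoffelHat g ginv H p j q x * christoffelHat g ginv H q i m x) := by
    rw [← Finset.sum_sub_distrib, ← Finset.sum_add_distrib]
    exact Finset.sum_congr rfl fun p _ => by ring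
  rw [expand, prod1 j m i, prod1 i m j, quad]
  -- now combine the hat-linear terms
  have lin1 : ∀ a b : Fin n, ∑ q, CLow g H k a q x * christoffelHat g ginv H q b m x
        - ∑ q, christoffelHat g ginv H q b m x * pd a (fun y => g y k q) x
      = - ∑ p, ∑ q, CLow g H p a k x * (ginv x p q * CLow g H q b m x) := by
    intro a b
    rw [← Finset.sum_sub_distrib, ← Finset.sum_neg_distrib]
    refine Finset.sum_congr rfl fun q _ => ?_
    rw [pd_g hgs a k q]
    have h3 : CLow g H k a q x * christoffelHat g ginv H q b m x
          - christoffelHat g ginv H q b m x * (christoffelLow g q a k x + christoffelLow g k a q x)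
        = -(CLow g H q a k x * christoffelHat g ginv H q b m x) := by
      linear_combination (corr a q) * christoffelHat g ginv H q b m x
    rw [h3, hat_eq q b m x, Finset.mul_sum, ← Finset.sum_neg_distrib]
  have goal' : pd i (CLow g H k j m) x
      - ∑ p, christoffelHat g ginv H p j m x * pd i (fun y => g y k p) x
      - (pd j (CLow g H k i m) x
        - ∑ p, christoffelHat g ginv H p i m x * pd j (fun y => g y k p) x)
      + (∑ q, CLow g H k i q x * christoffelHat g ginv H q j m x
        - ∑ q, CLow g H k j q x * christoffelHat g ginv H q i m x)
      = pd i (CLow g H k j m) x - pd j (CLow g H k i m) x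
      - ∑ p, ∑ q, CLow g H p i k x * (ginv x p q * CLow g H q j m x)
      + ∑ p, ∑ q, CLow g H p j k x * (ginv x p q * CLow g H q i m x) := by
    have l1 := lin1 i j
    have l2 := lin1 j i
    linarith
  exact goal'

end Aux3

section Final

variable {g ginv : EuclideanSpace ℝ (Fin n) → Fin n → Fin n → ℝ}
variable {H : EuclideanSpace ℝ (Fin n) → Fin n → Fin n → Fin n → ℝ}

lemma pd_CLow (hg4 : ∀ i j, ContDiff ℝ (⊤:ℕ∞) fun x => g x i j)
    (hH3 : ∀ i j k, ContDiff ℝ (⊤:ℕ∞) fun x => H x i j k) (a c b d : Fin n)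
    (x : EuclideanSpace ℝ (Fin n)) :
    pd a (CLow g H c b d) x
      = pd a (christoffelLow g c b d) x + (1/2) * pd a (fun y => H y c b d) x := by
  rw [show CLow g H c b d
      = fun y => christoffelLow g c b d y + (1/2) * H y c b d from rfl]
  rw [pd_add a x (diffAt (contDiff_christoffelLow hg4 c b d) x)
      (diffAt (contDiff_const.mul (hH3 c b d)) x),
    pd_const_mul a x (diffAt (hH3 c b d) x)]

end Final

/-- If the torsion 3-form `H` is closed, then the curvatures `R̂`, `R̆` of the
metric connections with torsion `+H` and `-H` satisfy the pair symmetry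
`R̂_{ijkm} = R̆_{kmij}`. -/
theorem curv_pair_symmetry
    (g ginv : EuclideanSpace ℝ (Fin n) → Fin n → Fin n → ℝ)
    (H : EuclideanSpace ℝ (Fin n) → Fin n → Fin n → Fin n → ℝ)
    (hg : IsRiemannianData g ginv) (hH : IsThreeForm H)
    (hclosed : ∀ (x : EuclideanSpace ℝ (Fin n)) (i j k m : Fin n), extDerH H i j k m x = 0) :
    ∀ (x : EuclideanSpace ℝ (Fin n)) (i j k m : Fin n),
      curvHat g ginv H i j k m x
        = curvHat g ginv (fun y a b c => -H y a b c) k m i j x := by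
  intro x i j k m
  obtain ⟨hgs, hpos, hinv, hg4, hg5⟩ := hg
  obtain ⟨hs1, hs2, hH3⟩ := hH
  set H' : EuclideanSpace ℝ (Fin n) → Fin n → Fin n → Fin n → ℝ :=
    fun y a b c => -H y a b c with hH'def
  have hH' : IsThreeForm H' :=
    ⟨fun x i j k => by simp only [hH'def]; rw [hs1 x i j k],
     fun x i j k => by simp only [hH'def]; rw [hs2 x i j k],
     fun i j k => (hH3 i j k).neg⟩
  obtain ⟨hs1', hs2', hH3'⟩ := hH'
  rw [curvHat_eq ⟨hgs, hpos, hinv, hg4, hg5⟩ ⟨hs1, hs2, hH3⟩ i j k m x,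
      curvHat_eq ⟨hgs, hpos, hinv, hg4, hg5⟩ ⟨hs1', hs2', hH3'⟩ k m i j x]
  -- swap lemma for lowered coefficients
  have CLsw : ∀ (p a b : Fin n) (y : EuclideanSpace ℝ (Fin n)),
      CLow g H' p a b y = CLow g H p b a y := by
    intro p a b y
    show christoffelLow g p a b y + (1/2) * (-H y p a b)
        = christoffelLow g p b a y + (1/2) * H y p b a
    rw [christoffelLow_symm hgs p a b y, show H y p b a = -H y p a b from by
      rw [hs2 y p a b]; ring]
  -- quadratic terms
  have q1 : ∑ p, ∑ q, CLow g H' p k i x * (ginv x p q * CLow g H' q m j x)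
      = ∑ p, ∑ q, CLow g H p i k x * (ginv x p q * CLow g H q j m x) := by
    refine Finset.sum_congr rfl fun p _ => Finset.sum_congr rfl fun q _ => ?_
    rw [CLsw, CLsw]
  have q2 : ∑ p, ∑ q, CLow g H' p m i x * (ginv x p q * CLow g H' q k j x)
      = ∑ p, ∑ q, CLow g H p j k x * (ginv x p q * CLow g H q i m x) := by
    calc ∑ p, ∑ q, CLow g H' p m i x * (ginv x p q * CLow g H' q k j x)
        = ∑ p, ∑ q, CLow g H p i m x * (ginv x p q * CLow g H q j k x) := by
          refine Finset.sum_congr rfl fun p _ => Finset.sum_congr rfl fun q _ => ?_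
          rw [CLsw, CLsw]
      _ = ∑ q, ∑ p, CLow g H p i m x * (ginv x p q * CLow g H q j k x) := Finset.sum_comm
      _ = ∑ p, ∑ q, CLow g H p j k x * (ginv x p q * CLow g H q i m x) := by
          refine Finset.sum_congr rfl fun q _ => Finset.sum_congr rfl fun p _ => ?_
          rw [ginv_symm hgs hinv x p q]
          ring
  rw [q1, q2]
  -- derivative terms
  rw [pd_CLow hg4 hH3 i k j m x, pd_CLow hg4 hH3 j k i m x,
      pd_CLow hg4 hH3' k i m j x, pd_CLow hg4 hH3' m i k j x]
  have hb1 : (fun y => H' y i m j) = fun y => -H y i m j := rfl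
  have hb2 : (fun y => H' y i k j) = fun y => -H y i k j := rfl
  rw [hb1, hb2, pd_neg k x, pd_neg m x]
  -- second-derivative (Christoffel) part
  have hGamma : pd i (christoffelLow g k j m) x - pd j (christoffelLow g k i m) x
      - pd k (christoffelLow g i m j) x + pd m (christoffelLow g i k j) x = 0 := by
    rw [pd_christoffelLow hg4 i k j m x, pd_christoffelLow hg4 j k i m x,
        pd_christoffelLow hg4 k i m j x, pd_christoffelLow hg4 m i k j x]
    have e1 : pd i (pd j (fun y => g y m k)) x = pd j (pd i (fun y => g y m k)) x :=
      pd_pd_comm (hg4 m k) i j x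
    have e2 : pd i (pd m (fun y => g y j k)) x = pd m (pd i (fun y => g y k j)) x := by
      rw [pd_pd_comm (hg4 j k) i m x,
        show (fun y => g y j k) = fun y => g y k j from funext fun y => hgs y j k]
    have e3 : pd i (pd k (fun y => g y j m)) x = pd k (pd i (fun y => g y m j)) x := by
      rw [pd_pd_comm (hg4 j m) i k x,
        show (fun y => g y j m) = fun y => g y m j from funext fun y => hgs y j m]
    have e4 : pd j (pd m (fun y => g y i k)) x = pd m (pd j (fun y => g y k i)) x := by
      rw [pd_pd_comm (hg4 i k) j m x,
        show (fun y => g y i k) = fun y => g y k i from funext fun y => hgs y i k]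
    have e5 : pd j (pd k (fun y => g y i m)) x = pd k (pd j (fun y => g y m i)) x := by
      rw [pd_pd_comm (hg4 i m) j k x,
        show (fun y => g y i m) = fun y => g y m i from funext fun y => hgs y i m]
    have e6 : pd k (pd m (fun y => g y j i)) x = pd m (pd k (fun y => g y j i)) x :=
      pd_pd_comm (hg4 j i) k m x
    linarith
  -- dH part
  have hHd : pd i (fun y => H y k j m) x - pd j (fun y => H y k i m) x
      + pd k (fun y => H y i m j) x - pd m (fun y => H y i k j) x = 0 := by
    rw [show (fun y => H y k j m) = fun y => -H y j k m from funext fun y => hs1 y k j m,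
        show (fun y => H y k i m) = fun y => -H y i k m from funext fun y => hs1 y k i m,
        show (fun y => H y i m j) = fun y => -H y i j m from funext fun y => hs2 y i m j,
        show (fun y => H y i k j) = fun y => -H y i j k from funext fun y => hs2 y i k j,
        pd_neg i x, pd_neg j x, pd_neg k x, pd_neg m x]
    have hc := hclosed x i j k m
    unfold extDerH at hc
    linarith
  linarith
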